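/- arXiv:1112.0452 — 2 statements merged into one kernel-verified Lean document; each statement's English description precedes it below -/
import Mathlib

section
/- Let γ be an axis path in ℝ^d of the form γ = r₁e_{i₁} * r₂e_{i₂} * ⋯ * rₙe_{iₙ} (concatenation of straight segments, the k-th segment being rₖ times the basis vector e_{iₖ}, rₖ ≠ 0 and i_k ≠ i_{k+1}). Then the signature coefficient of the square-free word w = e_{i₁}e_{i₂}⋯e_{iₙ} equals C(w) = r₁r₂⋯rₙ, which is nonzero. -/
open scoped ENNReal Classical

/-- The approximation to the signature coefficient of the word `w` of the path
`γ : [s,t] → ℝ^d` given by the iterated Riemann–Stieltjes sum along the dyadic partition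
of `[s,t]` of mesh `(t-s)/2^m`. -/
noncomputable def dyadicSigSum (d : ℕ) (γ : ℝ → PiLp 1 fun _ : Fin d => ℝ) (s t : ℝ)
    {n : ℕ} (w : Fin n → Fin d) (m : ℕ) : ℝ :=
  ∑ j ∈ Finset.univ.filter (fun j : Fin n → Fin (2 ^ m) => StrictMono j),
    ∏ i : Fin n,
      (γ (s + (t - s) * ((j i : ℝ) + 1) / 2 ^ m) (w i) -
       γ (s + (t - s) * (j i : ℝ) / 2 ^ m) (w i))

/-- The signature coefficient `C_{s,t}(w) = ∫_{s<u₁<⋯<uₙ<t} dγ_{w₁}(u₁)⋯dγ_{wₙ}(uₙ)` of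
the word `w`, defined as the limit of iterated Riemann–Stieltjes sums along dyadic
partitions (for continuous paths of bounded variation this limit exists and is the
iterated integral over the simplex). -/
noncomputable def sigCoeff (d : ℕ) (γ : ℝ → PiLp 1 fun _ : Fin d => ℝ) (s t : ℝ)
    {n : ℕ} (w : Fin n → Fin d) : ℝ :=
  Filter.limUnder Filter.atTop (dyadicSigSum d γ s t w)

/-- The degree-`n` signature term `X^n_{s,t}(γ) ∈ (ℝ^d)^{⊗n}`, recorded by its coordinates
in the basis of words of length `n`, and normed with the `ℓ¹` norm of the coordinates:
for the `ℓ¹` norm on `ℝ^d` this is exactly the projective tensor norm on `(ℝ^d)^{⊗n}`. -/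
noncomputable def sig (d : ℕ) (γ : ℝ → PiLp 1 fun _ : Fin d => ℝ) (s t : ℝ) (n : ℕ) :
    PiLp 1 fun _ : Fin n → Fin d => ℝ :=
  WithLp.toLp 1 (fun w => sigCoeff d γ s t w)
/-- The axis path `γ = r₁e_{i₁} * ⋯ * rₙe_{iₙ}` in `ℝ^d` (with the `ℓ¹` norm),
parametrized on `[0,1]`: on the `k`-th of `n` equal subintervals it moves linearly by
`r k` in the coordinate direction `idx k`. -/
noncomputable def axisPath (d : ℕ) {n : ℕ} (idx : Fin n → Fin d) (r : Fin n → ℝ)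
    (t : ℝ) : PiLp 1 fun _ : Fin d => ℝ :=
  ∑ j : Fin n,
    (min (max ((n : ℝ) * t - (j : ℝ)) 0) 1 * r j) •
      (WithLp.toLp 1 (Pi.single (idx j) 1) : PiLp 1 fun _ : Fin d => ℝ)

noncomputable def apClamp (x : ℝ) : ℝ := min (max x 0) 1

lemma apClamp_mono : Monotone apClamp := fun a b h =>
  min_le_min (max_le_max h le_rfl) le_rfl

lemma apClamp_lip {a b : ℝ} (h : a ≤ b) : apClamp b - apClamp a ≤ b - a := by
  unfold apClamp
  rcases le_total a 0 with h0 | h0 <;> rcases le_total b 1 with h1 | h1 <;>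
    simp only [min_def, max_def] <;> split_ifs <;> linarith

lemma apClamp_of_nonpos {x : ℝ} (h : x ≤ 0) : apClamp x = 0 := by
  unfold apClamp
  rw [max_eq_right h, min_eq_left (by norm_num)]

lemma apClamp_of_one_le {x : ℝ} (h : 1 ≤ x) : apClamp x = 1 := by
  unfold apClamp
  rw [max_eq_left (by linarith), min_eq_right h]

noncomputable def apPhi (n k : ℕ) (t : ℝ) : ℝ := apClamp ((n : ℝ) * t - k)

noncomputable def apDelta (n m k q : ℕ) : ℝ :=
  apPhi n k (((q : ℝ) + 1) / 2 ^ m) - apPhi n k ((q : ℝ) / 2 ^ m)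

lemma div_le_div_pow {q : ℝ} (m : ℕ) : q / 2 ^ m ≤ (q + 1) / 2 ^ m := by
  have h2 : (0:ℝ) < 2 ^ m := by positivity
  gcongr
  linarith

lemma apDelta_nonneg (n m k q : ℕ) : 0 ≤ apDelta n m k q := by
  have hq := div_le_div_pow (q := (q:ℝ)) m
  have : (n:ℝ) * ((q:ℝ) / 2 ^ m) - k ≤ (n:ℝ) * (((q:ℝ) + 1) / 2 ^ m) - k := by
    have hn : (0:ℝ) ≤ n := Nat.cast_nonneg n
    nlinarith
  exact sub_nonneg.mpr (apClamp_mono this)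

lemma apDelta_le (n m k q : ℕ) : apDelta n m k q ≤ (n : ℝ) / 2 ^ m := by
  have h2 : (0:ℝ) < 2 ^ m := by positivity
  have hq := div_le_div_pow (q := (q:ℝ)) m
  have hle : (n:ℝ) * ((q:ℝ) / 2 ^ m) - k ≤ (n:ℝ) * (((q:ℝ) + 1) / 2 ^ m) - k := by
    have hn : (0:ℝ) ≤ n := Nat.cast_nonneg n
    nlinarith
  have := apClamp_lip hle
  unfold apDelta apPhi
  calc apClamp ((n:ℝ) * (((q:ℝ) + 1) / 2 ^ m) - k) - apClamp ((n:ℝ) * ((q:ℝ) / 2 ^ m) - k)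
      ≤ ((n:ℝ) * (((q:ℝ) + 1) / 2 ^ m) - k) - ((n:ℝ) * ((q:ℝ) / 2 ^ m) - k) := this
    _ = (n : ℝ) / 2 ^ m := by field_simp; ring

lemma apDelta_sum (n m : ℕ) {k : ℕ} (hk : k < n) :
    ∑ q ∈ Finset.range (2 ^ m), apDelta n m k q = 1 := by
  set F : ℕ → ℝ := fun q => apPhi n k ((q : ℝ) / 2 ^ m) with hF
  have key : ∀ q : ℕ, apDelta n m k q = F (q + 1) - F q := by
    intro q
    show apDelta n m k q = apPhi n k (((q + 1 : ℕ) : ℝ) / 2 ^ m) - apPhi n k ((q : ℝ) / 2 ^ m)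
    rw [apDelta]
    norm_num
  rw [Finset.sum_congr rfl fun q _ => key q, Finset.sum_range_sub F (2 ^ m)]
  have e1 : F (2 ^ m) = 1 := by
    have : ((2 ^ m : ℕ) : ℝ) / 2 ^ m = 1 := by push_cast; field_simp
    rw [hF]; simp only [this]
    exact apClamp_of_one_le (by
      have hkn : (k : ℝ) + 1 ≤ n := by exact_mod_cast hk
      linarith)
  have e0 : F 0 = 0 := by
    simp only [hF, Nat.cast_zero, zero_div]
    unfold apPhi
    rw [mul_zero, zero_sub]
    exact apClamp_of_nonpos (by simp)
  rw [e1, e0]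
  ring

lemma apDelta_support {n m k q : ℕ} (h : apDelta n m k q ≠ 0) :
    (q : ℝ) * n < (k + 1) * 2 ^ m ∧ (k : ℝ) * 2 ^ m < ((q : ℝ) + 1) * n := by
  have h2 : (0:ℝ) < 2 ^ m := by positivity
  constructor
  · by_contra hc
    push_neg at hc
    apply h
    unfold apDelta apPhi
    rw [apClamp_of_one_le, apClamp_of_one_le, sub_self]
    · rw [le_sub_iff_add_le, ← mul_div_assoc, le_div_iff₀ h2]
      nlinarith
    · rw [le_sub_iff_add_le, ← mul_div_assoc, le_div_iff₀ h2]
      nlinarith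
  · by_contra hc
    push_neg at hc
    apply h
    unfold apDelta apPhi
    rw [apClamp_of_nonpos, apClamp_of_nonpos, sub_self]
    · rw [sub_nonpos, ← mul_div_assoc, div_le_iff₀ h2]
      nlinarith
    · rw [sub_nonpos, ← mul_div_assoc, div_le_iff₀ h2]
      nlinarith

lemma apPin {n m : ℕ} (hn : 0 < n) {a b qa qb : ℕ} (hab : a < b)
    (ha : apDelta n m a qa ≠ 0) (hb : apDelta n m b qb ≠ 0) : qa ≤ qb := by
  have h1 := (apDelta_support ha).1
  have h2 := (apDelta_support hb).2
  have hab' : ((a : ℝ) + 1) * 2 ^ m ≤ (b : ℝ) * 2 ^ m := by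
    have : (a : ℝ) + 1 ≤ b := by exact_mod_cast hab
    have h2' : (0:ℝ) < 2 ^ m := by positivity
    nlinarith
  have hnn : (0:ℝ) < n := by exact_mod_cast hn
  have : (qa : ℝ) * n < ((qb : ℝ) + 1) * n := by linarith
  have : (qa : ℝ) < (qb : ℝ) + 1 := lt_of_mul_lt_mul_right this (le_of_lt hnn)
  exact_mod_cast Nat.lt_succ_iff.mp (by exact_mod_cast this)

lemma piLp_sum_apply {d : ℕ} {ι : Type*} (s : Finset ι)
    (f : ι → PiLp 1 fun _ : Fin d => ℝ) (c : Fin d) :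
    (∑ i ∈ s, f i) c = ∑ i ∈ s, f i c := by
  induction s using Finset.cons_induction with
  | empty => rfl
  | cons a s ha ih => rw [Finset.sum_cons, Finset.sum_cons, ← ih]; rfl

lemma axisPath_apply (d : ℕ) {n : ℕ} (idx : Fin n → Fin d) (r : Fin n → ℝ)
    (t : ℝ) (c : Fin d) :
    axisPath d idx r t c = ∑ k : Fin n, if idx k = c then apPhi n k t * r k else 0 := by
  unfold axisPath
  rw [piLp_sum_apply]
  apply Finset.sum_congr rfl
  intro k _
  have hsmul : ((min (max ((n : ℝ) * t - (k : ℝ)) 0) 1 * r k) •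
      (WithLp.toLp 1 (Pi.single (idx k) 1) : PiLp 1 fun _ : Fin d => ℝ)) c
      = (min (max ((n : ℝ) * t - (k : ℝ)) 0) 1 * r k) *
        (Pi.single (idx k) (1:ℝ) : ∀ _ : Fin d, ℝ) c := rfl
  rw [hsmul, Pi.single_apply]
  by_cases h : idx k = c
  · simp [h, eq_comm, apPhi, apClamp]
  · rw [if_neg h, if_neg (fun hc : c = idx k => h hc.symm), mul_zero]

lemma axisPath_incr (d : ℕ) {n : ℕ} (idx : Fin n → Fin d) (r : Fin n → ℝ)
    (c : Fin d) (m q : ℕ) :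
    axisPath d idx r (((q : ℝ) + 1) / 2 ^ m) c - axisPath d idx r ((q : ℝ) / 2 ^ m) c
      = ∑ k : Fin n, if idx k = c then apDelta n m (k : ℕ) q * r k else 0 := by
  rw [axisPath_apply, axisPath_apply, ← Finset.sum_sub_distrib]
  apply Finset.sum_congr rfl
  intro k _
  split_ifs with h
  · unfold apDelta; ring
  · ring

lemma fin_le_strictMono {n : ℕ} {f : Fin n → Fin n} (h : StrictMono f) :
    ∀ i : Fin n, (i : ℕ) ≤ (f i : ℕ) := by
  suffices H : ∀ v : ℕ, ∀ i : Fin n, (i : ℕ) = v → v ≤ (f i : ℕ) by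
    intro i; exact H i.val i rfl
  intro v
  induction v using Nat.strong_induction_on with
  | _ v ih =>
    intro i hi
    rcases Nat.eq_zero_or_pos v with h0 | h0
    · omega
    · have hlt : (⟨v - 1, by omega⟩ : Fin n) < i := by
        rw [Fin.lt_def]; simp; omega
      have hval := ih (v - 1) (by omega) ⟨v - 1, by omega⟩ rfl
      have h2 := Fin.lt_def.mp (h hlt)
      omega

lemma fin_strictMono_eq_id' {n : ℕ} {f : Fin n → Fin n} (h : StrictMono f) : f = id := by
  have h2 : StrictMono (fun i : Fin n => (f i.rev).rev) := by
    intro a b hab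
    exact Fin.rev_lt_rev.mpr (h (Fin.rev_lt_rev.mpr hab))
  funext i
  have u1 := fin_le_strictMono h i
  have u2 := fin_le_strictMono h2 i.rev
  simp only [Fin.rev_rev] at u2
  rw [Fin.val_rev, Fin.val_rev] at u2
  have hfi' := (f i).isLt
  have hii := i.isLt
  exact Fin.ext (by simp at u2 ⊢; omega)


noncomputable def Tsum (n m : ℕ) : ℝ :=
  ∑ j ∈ Finset.univ.filter (fun j : Fin n → Fin (2 ^ m) => StrictMono j),
    ∏ i : Fin n, apDelta n m (i : ℕ) ((j i : ℕ))

lemma sum_biUnion_le_real {ι α : Type*} [DecidableEq α] (s : Finset ι) (t : ι → Finset α)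
    (f : α → ℝ) (hf : ∀ a, 0 ≤ f a) :
    ∑ a ∈ s.biUnion t, f a ≤ ∑ i ∈ s, ∑ a ∈ t i, f a := by
  induction s using Finset.induction with
  | empty => simp
  | insert a s hnotmem ih =>
    rw [Finset.biUnion_insert, Finset.sum_insert hnotmem]
    calc ∑ x ∈ t a ∪ s.biUnion t, f x
        = ∑ x ∈ t a, f x + ∑ x ∈ (s.biUnion t) \ t a, f x := by
          rw [← Finset.sum_union (Finset.disjoint_sdiff)]
          congr 1
          rw [Finset.union_sdiff_self_eq_union]
      _ ≤ ∑ x ∈ t a, f x + ∑ x ∈ s.biUnion t, f x :=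
          add_le_add le_rfl (Finset.sum_le_sum_of_subset_of_nonneg (Finset.sdiff_subset)
            (fun x _ _ => hf x))
      _ ≤ ∑ x ∈ t a, f x + ∑ i ∈ s, ∑ x ∈ t i, f x := add_le_add le_rfl ih

section Main

variable {d n : ℕ} (idx : Fin n → Fin d) (r : Fin n → ℝ)

lemma prod_incr_eq (hn : 0 < n) (hr : ∀ k, r k ≠ 0)
    (hsf : ∀ k : Fin n, ∀ h : (k : ℕ) + 1 < n, idx k ≠ idx ⟨(k : ℕ) + 1, h⟩)
    (m : ℕ) (j : Fin n → Fin (2 ^ m)) (hj : StrictMono j) :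
    (∏ i : Fin n, ∑ k : Fin n,
        if idx k = idx i then apDelta n m (k : ℕ) ((j i : ℕ)) * r k else 0)
      = (∏ i : Fin n, apDelta n m (i : ℕ) ((j i : ℕ))) * ∏ i : Fin n, r i := by
  rw [Finset.prod_univ_sum]
  rw [Finset.sum_eq_single (id : Fin n → Fin n)]
  · rw [← Finset.prod_mul_distrib]
    apply Finset.prod_congr rfl
    intro i _
    simp
  · intro p _ hne
    by_contra hne0
    have hfac : ∀ i : Fin n,
        (if idx (p i) = idx i then apDelta n m ((p i : ℕ)) ((j i : ℕ)) * r (p i) else 0) ≠ 0 :=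
      fun i => Finset.prod_ne_zero_iff.mp hne0 i (Finset.mem_univ i)
    have hidx : ∀ i, idx (p i) = idx i := by
      intro i
      by_contra hcon
      exact hfac i (if_neg hcon)
    have hdel : ∀ i, apDelta n m ((p i : ℕ)) ((j i : ℕ)) ≠ 0 := by
      intro i
      have := hfac i
      rw [if_pos (hidx i)] at this
      exact fun hz => this (by rw [hz, zero_mul])
    have hmono : Monotone p := by
      intro a b hab
      rcases eq_or_lt_of_le hab with heq | hlt
      · exact le_of_eq (by rw [heq])
      · by_contra hcon
        push_neg at hcon
        have hpin := apPin hn (Fin.lt_def.mp hcon) (hdel b) (hdel a)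
        have hjab := Fin.lt_def.mp (hj hlt)
        omega
    have hstrict : StrictMono p := by
      intro a b hab
      have hb : (a : ℕ) + 1 ≤ (b : ℕ) := Fin.lt_def.mp hab
      have ha1 : (a : ℕ) + 1 < n := lt_of_le_of_lt hb b.isLt
      set a' : Fin n := ⟨(a : ℕ) + 1, ha1⟩ with ha'
      have haa' : a ≤ a' := by
        rw [Fin.le_def]
        simp [ha']
      have ha'b : a' ≤ b := by
        rw [Fin.le_def]
        simp only [ha']
        omega
      have hstep : p a < p a' := by
        rcases eq_or_lt_of_le (hmono haa') with heq | hlt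
        · exfalso
          apply hsf a ha1
          rw [← hidx a, ← hidx a', heq]
        · exact hlt
      exact lt_of_lt_of_le hstep (hmono ha'b)
    exact hne (fin_strictMono_eq_id' hstrict)
  · intro hid
    exact absurd (by simp) hid

lemma sumG_univ (hn : 0 < n) (m : ℕ) :
    ∑ j : Fin n → Fin (2 ^ m), ∏ i : Fin n, apDelta n m (i : ℕ) ((j i : ℕ)) = 1 := by
  have hkey := Finset.prod_univ_sum (fun _ : Fin n => (Finset.univ : Finset (Fin (2 ^ m))))
    (fun i q => apDelta n m (i : ℕ) ((q : ℕ)))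
  rw [Fintype.piFinset_univ] at hkey
  rw [← hkey]
  rw [Finset.prod_congr rfl (fun i _ => ?_), Finset.prod_const_one]
  rw [Fin.sum_univ_eq_sum_range (fun q => apDelta n m (i : ℕ) q) (2 ^ m)]
  exact apDelta_sum n m i.isLt

lemma Tsum_le_one (hn : 0 < n) (m : ℕ) : Tsum n m ≤ 1 := by
  rw [← sumG_univ hn m]
  exact Finset.sum_le_sum_of_subset_of_nonneg (Finset.filter_subset _ _)
    (fun j _ _ => Finset.prod_nonneg fun i _ => apDelta_nonneg n m _ _)

lemma notSM_bound (hn : 0 < n) (m : ℕ) :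
    ∑ j ∈ Finset.univ.filter (fun j : Fin n → Fin (2 ^ m) => ¬ StrictMono j),
      ∏ i : Fin n, apDelta n m (i : ℕ) ((j i : ℕ)) ≤ (n : ℝ) ^ 3 / 2 ^ m := by
  classical
  set G : (Fin n → Fin (2 ^ m)) → ℝ := fun j => ∏ i : Fin n, apDelta n m (i : ℕ) ((j i : ℕ))
    with hG
  have hGnn : ∀ j, 0 ≤ G j := fun j => Finset.prod_nonneg fun i _ => apDelta_nonneg n m _ _
  set P : Finset (Fin n × Fin n) := Finset.univ.filter (fun p => p.1 < p.2) with hP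
  set Qp : Fin n × Fin n → Finset (Fin (2 ^ m)) := fun p =>
    Finset.univ.filter (fun q => apDelta n m ((p.1 : ℕ)) ((q : ℕ)) ≠ 0 ∧
      apDelta n m ((p.2 : ℕ)) ((q : ℕ)) ≠ 0) with hQp
  set S : Fin n × Fin n → Finset (Fin n → Fin (2 ^ m)) := fun p =>
    Fintype.piFinset (fun l : Fin n => if l = p.1 ∨ l = p.2 then Qp p else Finset.univ)
    with hS
  have hcover : (Finset.univ.filter (fun j : Fin n → Fin (2 ^ m) => ¬ StrictMono j)).filter
      (fun j => G j ≠ 0) ⊆ P.biUnion S := by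
    intro j hj
    rw [Finset.mem_filter] at hj
    obtain ⟨hj1, hj2⟩ := hj
    rw [Finset.mem_filter] at hj1
    obtain ⟨-, hnsm⟩ := hj1
    have hj2' : (∏ i : Fin n, apDelta n m ((i : ℕ)) ((j i : ℕ))) ≠ 0 := hj2
    have hdel : ∀ i : Fin n, apDelta n m ((i : ℕ)) ((j i : ℕ)) ≠ 0 :=
      fun i => Finset.prod_ne_zero_iff.mp hj2' i (Finset.mem_univ i)
    rw [StrictMono] at hnsm
    push_neg at hnsm
    obtain ⟨a, b, hab, hba⟩ := hnsm
    have hpin := apPin hn (Fin.lt_def.mp hab) (hdel a) (hdel b)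
    have heq : j a = j b := Fin.ext (le_antisymm hpin (Fin.le_def.mp hba))
    rw [Finset.mem_biUnion]
    refine ⟨(a, b), by simp [hP, hab], ?_⟩
    rw [hS, Fintype.mem_piFinset]
    intro l
    by_cases hl : l = a ∨ l = b
    · rw [if_pos hl]
      rcases hl with hl | hl
      · subst hl
        simp only [hQp, Finset.mem_filter, Finset.mem_univ, true_and]
        exact ⟨hdel l, heq ▸ hdel b⟩
      · subst hl
        simp only [hQp, Finset.mem_filter, Finset.mem_univ, true_and]
        exact ⟨heq ▸ hdel a, hdel l⟩
    · rw [if_neg hl]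
      exact Finset.mem_univ _
  calc ∑ j ∈ Finset.univ.filter (fun j : Fin n → Fin (2 ^ m) => ¬ StrictMono j), G j
      = ∑ j ∈ (Finset.univ.filter
          (fun j : Fin n → Fin (2 ^ m) => ¬ StrictMono j)).filter (fun j => G j ≠ 0), G j := by
        rw [Finset.sum_filter_ne_zero]
    _ ≤ ∑ j ∈ P.biUnion S, G j :=
        Finset.sum_le_sum_of_subset_of_nonneg hcover (fun j _ _ => hGnn j)
    _ ≤ ∑ p ∈ P, ∑ j ∈ S p, G j := sum_biUnion_le_real P S G hGnn
    _ ≤ ∑ _p ∈ P, (n : ℝ) / 2 ^ m := by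
        apply Finset.sum_le_sum
        intro p hp
        have hplt : p.1 < p.2 := by
          rw [hP, Finset.mem_filter] at hp
          exact hp.2
        have hfact : ∑ j ∈ S p, G j = ∏ l : Fin n,
            ∑ q ∈ (if l = p.1 ∨ l = p.2 then Qp p else Finset.univ),
              apDelta n m ((l : ℕ)) ((q : ℕ)) := by
          rw [Finset.prod_univ_sum]
        rw [hfact]
        have hone : ∀ l : Fin n,
            ∑ q ∈ (if l = p.1 ∨ l = p.2 then Qp p else Finset.univ),
              apDelta n m ((l : ℕ)) ((q : ℕ)) ≤ 1 := by
          intro l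
          calc ∑ q ∈ (if l = p.1 ∨ l = p.2 then Qp p else Finset.univ),
                apDelta n m ((l : ℕ)) ((q : ℕ))
              ≤ ∑ q : Fin (2 ^ m), apDelta n m ((l : ℕ)) ((q : ℕ)) := by
                apply Finset.sum_le_sum_of_subset_of_nonneg
                · split_ifs
                  · exact Finset.filter_subset _ _
                  · exact Finset.Subset.refl _
                · exact fun q _ _ => apDelta_nonneg n m _ _
            _ = 1 := by
                rw [Fin.sum_univ_eq_sum_range (fun q => apDelta n m (l : ℕ) q) (2 ^ m)]
                exact apDelta_sum n m l.isLt
        have hsmall : ∑ q ∈ (if p.1 = p.1 ∨ p.1 = p.2 then Qp p else Finset.univ),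
            apDelta n m ((p.1 : ℕ)) ((q : ℕ)) ≤ (n : ℝ) / 2 ^ m := by
          rw [if_pos (Or.inl rfl)]
          have hsub : (Qp p).card ≤ 1 := by
            rw [Finset.card_le_one]
            intro x hx y hy
            rw [hQp, Finset.mem_filter] at hx hy
            have h1 := apPin hn (Fin.lt_def.mp hplt) hx.2.1 hy.2.2
            have h2 := apPin hn (Fin.lt_def.mp hplt) hy.2.1 hx.2.2
            exact Fin.ext (le_antisymm h1 h2)
          calc ∑ q ∈ Qp p, apDelta n m ((p.1 : ℕ)) ((q : ℕ))
              ≤ (Qp p).card • ((n : ℝ) / 2 ^ m) :=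
                Finset.sum_le_card_nsmul _ _ _ (fun q _ => apDelta_le n m _ _)
            _ = ((Qp p).card : ℝ) * ((n : ℝ) / 2 ^ m) := by rw [nsmul_eq_mul]
            _ ≤ 1 * ((n : ℝ) / 2 ^ m) := by
                apply mul_le_mul_of_nonneg_right _ (by positivity)
                exact_mod_cast hsub
            _ = (n : ℝ) / 2 ^ m := one_mul _
        calc (∏ l : Fin n, ∑ q ∈ (if l = p.1 ∨ l = p.2 then Qp p else Finset.univ),
              apDelta n m ((l : ℕ)) ((q : ℕ)))
            ≤ ∏ l : Fin n, (if l = p.1 then (n : ℝ) / 2 ^ m else 1) := by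
              apply Finset.prod_le_prod
              · intro l _
                apply Finset.sum_nonneg
                exact fun q _ => apDelta_nonneg n m _ _
              · intro l _
                by_cases hl : l = p.1
                · subst hl
                  rw [if_pos rfl]
                  exact hsmall
                · rw [if_neg hl]
                  exact hone l
          _ = (n : ℝ) / 2 ^ m := by
              rw [Finset.prod_ite_eq' Finset.univ p.1 (fun _ => (n : ℝ) / 2 ^ m)]
              rw [if_pos (Finset.mem_univ _)]
    _ ≤ (n : ℝ) ^ 3 / 2 ^ m := by
        rw [Finset.sum_const, nsmul_eq_mul]
        have hcard : (P.card : ℝ) ≤ (n : ℝ) ^ 2 := by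
          have h1 : P.card ≤ n * n := by
            calc P.card ≤ (Finset.univ : Finset (Fin n × Fin n)).card := Finset.card_filter_le _ _
              _ = n * n := by simp [Finset.card_univ]
          calc (P.card : ℝ) ≤ ((n * n : ℕ) : ℝ) := by exact_mod_cast h1
            _ = (n : ℝ) ^ 2 := by push_cast; ring
        calc (P.card : ℝ) * ((n : ℝ) / 2 ^ m) ≤ (n : ℝ) ^ 2 * ((n : ℝ) / 2 ^ m) := by
              apply mul_le_mul_of_nonneg_right hcard (by positivity)
          _ = (n : ℝ) ^ 3 / 2 ^ m := by ring

lemma Tsum_lower (hn : 0 < n) (m : ℕ) : 1 - (n : ℝ) ^ 3 / 2 ^ m ≤ Tsum n m := by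
  have hsplit := Finset.sum_filter_add_sum_filter_not (Finset.univ : Finset (Fin n → Fin (2 ^ m)))
    (fun j => StrictMono j) (fun j => ∏ i : Fin n, apDelta n m (i : ℕ) ((j i : ℕ)))
  have huniv := sumG_univ hn m
  have hb := notSM_bound hn m
  unfold Tsum
  linarith [hsplit, huniv, hb]

lemma dyadic_eq (hn : 0 < n) (hr : ∀ k, r k ≠ 0)
    (hsf : ∀ k : Fin n, ∀ h : (k : ℕ) + 1 < n, idx k ≠ idx ⟨(k : ℕ) + 1, h⟩) (m : ℕ) :
    dyadicSigSum d (axisPath d idx r) 0 1 idx m = (∏ i : Fin n, r i) * Tsum n m := by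
  unfold dyadicSigSum Tsum
  rw [Finset.mul_sum]
  apply Finset.sum_congr rfl
  intro j hj
  have hjm : StrictMono j := (Finset.mem_filter.mp hj).2
  have hterm : ∀ i : Fin n,
      axisPath d idx r (0 + (1 - 0) * ((j i : ℝ) + 1) / 2 ^ m) (idx i) -
      axisPath d idx r (0 + (1 - 0) * ((j i : ℝ)) / 2 ^ m) (idx i)
      = ∑ k : Fin n, if idx k = idx i then apDelta n m (k : ℕ) ((j i : ℕ)) * r k else 0 := by
    intro i
    have h1 : (0:ℝ) + (1 - 0) * ((j i : ℝ) + 1) / 2 ^ m = (((j i : ℕ) : ℝ) + 1) / 2 ^ m := by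
      push_cast; ring
    have h2 : (0:ℝ) + (1 - 0) * ((j i : ℝ)) / 2 ^ m = ((j i : ℕ) : ℝ) / 2 ^ m := by
      push_cast; ring
    rw [h1, h2]
    exact axisPath_incr d idx r (idx i) m ((j i : ℕ))
  rw [Finset.prod_congr rfl (fun i _ => hterm i), prod_incr_eq idx r hn hr hsf m j hjm]
  ring

end Main

/-- For a reduced axis path `γ = r₁e_{i₁} * ⋯ * rₙe_{iₙ}` (all `rₖ ≠ 0`, consecutive
directions distinct), the signature coefficient of the square-free shape word
`w = e_{i₁}⋯e_{iₙ}` is `C(w) = r₁⋯rₙ ≠ 0`. -/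
theorem axisPath_shape_coeff (d : ℕ) {n : ℕ} (idx : Fin n → Fin d) (r : Fin n → ℝ)
    (hr : ∀ k, r k ≠ 0)
    (hsf : ∀ k : Fin n, ∀ h : (k : ℕ) + 1 < n, idx k ≠ idx ⟨(k : ℕ) + 1, h⟩) :
    sigCoeff d (axisPath d idx r) 0 1 idx = ∏ k : Fin n, r k ∧
    sigCoeff d (axisPath d idx r) 0 1 idx ≠ 0 := by
  rcases Nat.eq_zero_or_pos n with hn | hn
  · subst hn
    have hd : dyadicSigSum d (axisPath d idx r) 0 1 idx = fun _ : ℕ => (1:ℝ) := by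
      funext m
      unfold dyadicSigSum
      have hsm : ∀ j : Fin 0 → Fin (2 ^ m), StrictMono j := fun j a _ _ => a.elim0
      rw [Finset.filter_true_of_mem (fun j _ => hsm j)]
      simp
    have hlim : sigCoeff d (axisPath d idx r) 0 1 idx = 1 := by
      unfold sigCoeff
      rw [hd]
      exact Filter.Tendsto.limUnder_eq tendsto_const_nhds
    constructor
    · rw [hlim]; simp
    · rw [hlim]; norm_num
  · have heq : ∀ m, dyadicSigSum d (axisPath d idx r) 0 1 idx m
        = (∏ i : Fin n, r i) * Tsum n m := dyadic_eq idx r hn hr hsf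
    have hhalf : Filter.Tendsto (fun m : ℕ => ((1:ℝ)/2)^m) Filter.atTop (nhds 0) :=
      tendsto_pow_atTop_nhds_zero_of_lt_one (by norm_num) (by norm_num)
    have hlow' : Filter.Tendsto (fun m : ℕ => 1 - (n:ℝ)^3/2^m) Filter.atTop (nhds 1) := by
      have hform : (fun m : ℕ => 1 - (n:ℝ)^3/2^m) = fun m : ℕ => 1 - (n:ℝ)^3 * ((1:ℝ)/2)^m := by
        funext m; rw [div_pow, one_pow]; ring
      rw [hform]
      have := (hhalf.const_mul ((n:ℝ)^3)).const_sub 1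
      simpa using this
    have hT : Filter.Tendsto (Tsum n) Filter.atTop (nhds 1) :=
      tendsto_of_tendsto_of_tendsto_of_le_of_le hlow' tendsto_const_nhds
        (fun m => Tsum_lower hn m) (fun m => Tsum_le_one hn m)
    have htend : Filter.Tendsto (dyadicSigSum d (axisPath d idx r) 0 1 idx) Filter.atTop
        (nhds (∏ i : Fin n, r i)) := by
      have h2 := hT.const_mul (∏ i : Fin n, r i)
      rw [mul_one] at h2
      exact Filter.Tendsto.congr (fun m => (heq m).symm) h2
    have hlim : sigCoeff d (axisPath d idx r) 0 1 idx = ∏ i : Fin n, r i :=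
      htend.limUnder_eq
    exact ⟨hlim, hlim ▸ Finset.prod_ne_zero_iff.mpr (fun k _ => hr k)⟩
end

section
/- Let X be the signature of a tree-reduced path γ : [0,1] → ℝ^d of length L, parametrized at unit speed and starting at the origin. Suppose (γ̂^{(N)}) is a sequence of paths starting at the origin, parametrized at constant speed, each of length at most L, such that for each n, X^n(γ̂^{(N)}) → X^n(γ) as N → ∞. Then γ̂^{(N)} converges uniformly to γ on [0,1]. -/
open scoped ENNReal Classical

/-! ### Auxiliary lemmas -/

section Aux

open Filter Set Finset

set_option linter.unnecessarySeqFocus false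
set_option linter.unnecessarySimpa false

private lemma abs_coord_le {ι : Type*} [Fintype ι] (x y : PiLp 1 fun _ : ι => ℝ) (a : ι) :
    |x a - y a| ≤ dist x y := by
  have h := PiLp.dist_eq_sum (p := 1) (by norm_num) x y
  norm_num at h
  rw [h]
  calc |x a - y a| = dist (x a) (y a) := (Real.dist_eq _ _).symm
    _ ≤ ∑ b, dist (x b) (y b) := Finset.single_le_sum (fun b _ => dist_nonneg) (Finset.mem_univ a)

private lemma tendsto_coord {ι : Type*} [Fintype ι] {α : Type*} {l : Filter α}
    {x : α → PiLp 1 fun _ : ι => ℝ} {y : PiLp 1 fun _ : ι => ℝ}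
    (h : Filter.Tendsto x l (nhds y)) (a : ι) :
    Filter.Tendsto (fun k => x k a) l (nhds (y a)) := by
  rw [tendsto_iff_dist_tendsto_zero] at h ⊢
  refine squeeze_zero (fun k => dist_nonneg) (fun k => ?_) h
  rw [Real.dist_eq]
  exact abs_coord_le _ _ _

private lemma mem_Icc_div (M q : ℕ) (hq : q ≤ 2 ^ M) :
    (q : ℝ) / 2 ^ M ∈ Set.Icc (0 : ℝ) 1 := by
  constructor
  · positivity
  · rw [div_le_one (by positivity)]
    exact_mod_cast hq

/-- The increment of the `a`-th coordinate of `σ` over the `q`-th dyadic interval of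
mesh `2⁻ᴹ`. -/
private noncomputable def inc (d : ℕ) (σ : ℝ → PiLp 1 fun _ : Fin d => ℝ) (M : ℕ)
    (a : Fin d) (q : ℕ) : ℝ :=
  σ (((q : ℝ) + 1) / 2 ^ M) a - σ ((q : ℝ) / 2 ^ M) a

private lemma inc_bound {d : ℕ} {σ : ℝ → PiLp 1 fun _ : Fin d => ℝ} {L : ℝ}
    (hσ : ∀ u ∈ Set.Icc (0:ℝ) 1, ∀ v ∈ Set.Icc (0:ℝ) 1, dist (σ u) (σ v) ≤ L * dist u v)
    (M : ℕ) (a : Fin d) (q : ℕ) (hq : q < 2 ^ M) :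
    |inc d σ M a q| ≤ L / 2 ^ M := by
  have h1 : ((q : ℝ) + 1) / 2 ^ M ∈ Set.Icc (0:ℝ) 1 := by
    have := mem_Icc_div M (q + 1) hq
    push_cast at this
    exact this
  have h2 : (q : ℝ) / 2 ^ M ∈ Set.Icc (0:ℝ) 1 := mem_Icc_div M q hq.le
  have hd : dist (((q:ℝ) + 1) / 2 ^ M) ((q:ℝ) / 2 ^ M) = 1 / 2 ^ M := by
    rw [Real.dist_eq, div_sub_div_same]
    norm_num
  calc |inc d σ M a q| ≤ dist (σ (((q:ℝ) + 1) / 2 ^ M)) (σ ((q:ℝ) / 2 ^ M)) :=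
        abs_coord_le _ _ _
    _ ≤ L * dist (((q:ℝ) + 1) / 2 ^ M) ((q:ℝ) / 2 ^ M) := hσ _ h1 _ h2
    _ = L / 2 ^ M := by rw [hd]; ring

private lemma dyadicSigSum_eq_sum_inc (d : ℕ) (σ : ℝ → PiLp 1 fun _ : Fin d => ℝ)
    {n : ℕ} (w : Fin n → Fin d) (M : ℕ) :
    dyadicSigSum d σ 0 1 w M =
      ∑ k ∈ Finset.univ.filter (fun k : Fin n → Fin (2 ^ M) => StrictMono k),
        ∏ i : Fin n, inc d σ M (w i) (k i) := by
  simp only [dyadicSigSum, inc, zero_add, sub_zero, one_mul]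

private lemma coarse_eq (d : ℕ) (σ : ℝ → PiLp 1 fun _ : Fin d => ℝ)
    {n : ℕ} (w : Fin n → Fin d) (m : ℕ) :
    dyadicSigSum d σ 0 1 w m =
      ∑ j ∈ Finset.univ.filter (fun j : Fin n → Fin (2 ^ m) => StrictMono j),
        ∏ i : Fin n,
          (inc d σ (m + 1) (w i) (2 * (j i : ℕ)) + inc d σ (m + 1) (w i) (2 * (j i : ℕ) + 1)) := by
  rw [dyadicSigSum_eq_sum_inc]
  refine Finset.sum_congr rfl fun j _ => Finset.prod_congr rfl fun i _ => ?_
  unfold inc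
  push_cast
  have h1 : (2 * ((j i : ℕ) : ℝ)) / 2 ^ (m + 1) = ((j i : ℕ) : ℝ) / 2 ^ m := by
    rw [pow_succ]; field_simp
  have h2 : (2 * ((j i : ℕ) : ℝ) + 1 + 1) / 2 ^ (m + 1) = (((j i : ℕ) : ℝ) + 1) / 2 ^ m := by
    rw [pow_succ]; field_simp; ring
  rw [h1, h2]
  ring

/-- Expanding each coarse dyadic increment into the two fine ones: the coarse iterated sum
equals the fine iterated sum restricted to tuples whose half-indices are strictly
monotone. -/
private lemma refine_eq {n K : ℕ} (g : Fin n → ℕ → ℝ) :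
    (∑ j ∈ Finset.univ.filter (fun j : Fin n → Fin (2 ^ K) => StrictMono j),
      ∏ i : Fin n, (g i (2 * (j i : ℕ)) + g i (2 * (j i : ℕ) + 1))) =
    ∑ k ∈ Finset.univ.filter
        (fun k : Fin n → Fin (2 ^ (K + 1)) => StrictMono (fun i => (k i : ℕ) / 2)),
      ∏ i : Fin n, g i (k i) := by
  have hpow : (2 : ℕ) ^ (K + 1) = 2 ^ K * 2 := pow_succ 2 K
  calc
    (∑ j ∈ Finset.univ.filter (fun j : Fin n → Fin (2 ^ K) => StrictMono j),
        ∏ i : Fin n, (g i (2 * (j i : ℕ)) + g i (2 * (j i : ℕ) + 1)))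
      = ∑ j ∈ Finset.univ.filter (fun j : Fin n → Fin (2 ^ K) => StrictMono j),
          ∑ t ∈ (Finset.univ : Finset (Fin n)).powerset,
            (∏ i ∈ t, g i (2 * (j i : ℕ))) * ∏ i ∈ Finset.univ \ t, g i (2 * (j i : ℕ) + 1) :=
        Finset.sum_congr rfl fun j _ => Finset.prod_add _ _ _
    _ = ∑ p ∈ (Finset.univ.filter (fun j : Fin n → Fin (2 ^ K) => StrictMono j)) ×ˢ
          (Finset.univ : Finset (Fin n)).powerset,
          (∏ i ∈ p.2, g i (2 * (p.1 i : ℕ))) * ∏ i ∈ Finset.univ \ p.2, g i (2 * (p.1 i : ℕ) + 1) := by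
        rw [Finset.sum_product]
    _ = _ := ?_
  refine Finset.sum_nbij'
    (i := fun p => fun i : Fin n =>
      (⟨2 * (p.1 i : ℕ) + (if i ∈ p.2 then 0 else 1), by
        have := (p.1 i).isLt
        rw [hpow]; split <;> omega⟩ : Fin (2 ^ (K + 1))))
    (j := fun k =>
      (fun i : Fin n => (⟨(k i : ℕ) / 2, by
          have h2 := lt_of_lt_of_eq (k i).isLt hpow; omega⟩ : Fin (2 ^ K)),
       Finset.univ.filter fun i => (k i : ℕ) % 2 = 0))
    ?_ ?_ ?_ ?_ ?_
  · -- maps to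
    rintro ⟨j, t⟩ hp
    simp only [Finset.mem_product, Finset.mem_filter, Finset.mem_univ, true_and] at hp ⊢
    intro x y hxy
    have hj : (j x : ℕ) < (j y : ℕ) := hp.1 hxy
    simp only
    split <;> split <;> omega
  · -- maps back
    rintro k hk
    simp only [Finset.mem_filter, Finset.mem_univ, true_and] at hk
    simp only [Finset.mem_product, Finset.mem_filter, Finset.mem_univ, true_and,
      Finset.mem_powerset]
    exact ⟨fun x y hxy => hk hxy, Finset.subset_univ _⟩
  · -- left inverse
    rintro ⟨j, t⟩ hp
    refine Prod.ext ?_ ?_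
    · funext i
      apply Fin.ext
      simp only
      by_cases hit : i ∈ t <;> simp [hit] <;> omega
    · simp only
      ext i
      simp only [Finset.mem_filter, Finset.mem_univ, true_and]
      by_cases hit : i ∈ t <;> simp [hit] <;> omega
  · -- right inverse
    rintro k hk
    funext i
    apply Fin.ext
    simp only
    by_cases h2 : (k i : ℕ) % 2 = 0 <;> simp [h2] <;> omega
  · -- values
    rintro ⟨j, t⟩ hp
    simp only
    rw [← Finset.prod_mul_prod_compl t
      (fun x => g x (2 * (j x : ℕ) + if x ∈ t then 0 else 1)),
      Finset.compl_eq_univ_sdiff]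
    congr 1
    · exact Finset.prod_congr rfl fun i hi => by simp [hi]
    · refine Finset.prod_congr rfl fun i hi => ?_
      rw [Finset.mem_sdiff] at hi
      simp [hi.2]

private lemma coarse_fine (d : ℕ) (σ : ℝ → PiLp 1 fun _ : Fin d => ℝ)
    {n : ℕ} (w : Fin n → Fin d) (m : ℕ) :
    dyadicSigSum d σ 0 1 w m =
      ∑ k ∈ Finset.univ.filter
          (fun k : Fin n → Fin (2 ^ (m + 1)) => StrictMono (fun i => (k i : ℕ) / 2)),
        ∏ i : Fin n, inc d σ (m + 1) (w i) (k i) := by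
  rw [coarse_eq]
  exact refine_eq (fun i q => inc d σ (m + 1) (w i) q)

private lemma half_strictMono_subset {n M : ℕ} :
    (Finset.univ.filter (fun k : Fin n → Fin M => StrictMono (fun i => (k i : ℕ) / 2))) ⊆
      Finset.univ.filter (fun k : Fin n → Fin M => StrictMono k) := by
  intro k hk
  simp only [Finset.mem_filter, Finset.mem_univ, true_and] at hk ⊢
  intro x y hxy
  have h2 := hk hxy
  dsimp only at h2
  rw [Fin.lt_def]
  omega

private lemma card_bad_le {n M : ℕ} :
    ((Finset.univ.filter (fun k : Fin n → Fin M => StrictMono k)) \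
      (Finset.univ.filter (fun k : Fin n → Fin M => StrictMono (fun i => (k i : ℕ) / 2)))).card
      ≤ n ^ 2 * M ^ (n - 1) := by
  classical
  set Cp : Fin n × Fin n → Finset (Fin n → Fin M) := fun p =>
    Finset.univ.filter (fun k => p.1 ≠ p.2 ∧ (k p.2 : ℕ) = (k p.1 : ℕ) + 1) with hCp
  have hsub : (Finset.univ.filter (fun k : Fin n → Fin M => StrictMono k)) \
      (Finset.univ.filter (fun k : Fin n → Fin M => StrictMono (fun i => (k i : ℕ) / 2)))
      ⊆ (Finset.univ ×ˢ Finset.univ : Finset (Fin n × Fin n)).biUnion Cp := by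
    intro k hk
    rw [Finset.mem_sdiff] at hk
    obtain ⟨hkB, hkA⟩ := hk
    simp only [Finset.mem_filter, Finset.mem_univ, true_and] at hkB hkA
    rw [StrictMono] at hkA
    push_neg at hkA
    obtain ⟨x, y, hxy, hle⟩ := hkA
    have hlt : (k x : ℕ) < (k y : ℕ) := by
      have := hkB hxy; rwa [Fin.lt_def] at this
    rw [Finset.mem_biUnion]
    refine ⟨(x, y), Finset.mem_product.mpr ⟨Finset.mem_univ _, Finset.mem_univ _⟩, ?_⟩
    simp only [hCp, Finset.mem_filter, Finset.mem_univ, true_and]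
    exact ⟨ne_of_lt hxy, by omega⟩
  calc _ ≤ ((Finset.univ ×ˢ Finset.univ : Finset (Fin n × Fin n)).biUnion Cp).card :=
        Finset.card_le_card hsub
    _ ≤ ∑ p ∈ (Finset.univ ×ˢ Finset.univ : Finset (Fin n × Fin n)), (Cp p).card :=
        Finset.card_biUnion_le
    _ ≤ ∑ _p ∈ (Finset.univ ×ˢ Finset.univ : Finset (Fin n × Fin n)), M ^ (n - 1) := by
        refine Finset.sum_le_sum fun p _ => ?_
        by_cases hpq : p.1 = p.2
        · have : Cp p = ∅ := by
            apply Finset.filter_false_of_mem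
            intro k _
            simp [hpq]
          simp [this]
        · have hinj : (Cp p).card ≤ Fintype.card ({i : Fin n // i ≠ p.2} → Fin M) := by
            rw [← Fintype.card_coe]
            apply Fintype.card_le_of_injective
              (fun k (i : {i : Fin n // i ≠ p.2}) => k.1 i.1)
            intro k k' h
            apply Subtype.ext
            funext i
            by_cases hi : i = p.2
            · subst hi
              have h1 := (Finset.mem_filter.mp k.2).2.2
              have h2 := (Finset.mem_filter.mp k'.2).2.2
              have h3 : k.1 p.1 = k'.1 p.1 := congrFun h ⟨p.1, hpq⟩
              apply Fin.ext
              rw [h1, h2, h3]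
            · exact congrFun h ⟨i, hi⟩
          refine hinj.trans ?_
          rw [Fintype.card_fun, Fintype.card_fin]
          have hcard : Fintype.card {i : Fin n // i ≠ p.2} = n - 1 := by
            have h := Fintype.card_subtype_compl (fun i : Fin n => i = p.2)
            simpa [Fintype.card_subtype_eq, Fintype.card_fin] using h
          rw [hcard]
    _ = n ^ 2 * M ^ (n - 1) := by
        rw [Finset.sum_const, Finset.card_product, Finset.card_univ, Fintype.card_fin,
          smul_eq_mul]
        ring

/-- The key quantitative estimate: passing from the dyadic partition of mesh `2⁻ᵐ` to the
one of mesh `2⁻⁽ᵐ⁺¹⁾` changes the iterated sum by at most `n² Lⁿ 2⁻⁽ᵐ⁺¹⁾`. -/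
private lemma dyadic_step {d n : ℕ} {σ : ℝ → PiLp 1 fun _ : Fin d => ℝ} {L : ℝ} (hL0 : 0 ≤ L)
    (hσ : ∀ u ∈ Set.Icc (0:ℝ) 1, ∀ v ∈ Set.Icc (0:ℝ) 1, dist (σ u) (σ v) ≤ L * dist u v)
    (w : Fin n → Fin d) (m : ℕ) :
    |dyadicSigSum d σ 0 1 w (m + 1) - dyadicSigSum d σ 0 1 w m| ≤
      (n:ℝ)^2 * L^n / 2^(m+1) := by
  have hA_B := half_strictMono_subset (n := n) (M := 2^(m+1))
  rw [dyadicSigSum_eq_sum_inc, coarse_fine]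
  rw [← Finset.sum_sdiff hA_B, add_sub_cancel_right]
  have hcard := card_bad_le (n := n) (M := 2^(m+1))
  calc |∑ k ∈ (Finset.univ.filter (fun k : Fin n → Fin (2^(m+1)) => StrictMono k)) \
        (Finset.univ.filter
          (fun k : Fin n → Fin (2^(m+1)) => StrictMono (fun i => (k i : ℕ) / 2))),
        ∏ i : Fin n, inc d σ (m+1) (w i) (k i)|
      ≤ ∑ k ∈ (Finset.univ.filter (fun k : Fin n → Fin (2^(m+1)) => StrictMono k)) \
        (Finset.univ.filter
          (fun k : Fin n → Fin (2^(m+1)) => StrictMono (fun i => (k i : ℕ) / 2))),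
        |∏ i : Fin n, inc d σ (m+1) (w i) (k i)| := Finset.abs_sum_le_sum_abs _ _
    _ ≤ ∑ _k ∈ (Finset.univ.filter (fun k : Fin n → Fin (2^(m+1)) => StrictMono k)) \
        (Finset.univ.filter
          (fun k : Fin n → Fin (2^(m+1)) => StrictMono (fun i => (k i : ℕ) / 2))),
        (L / 2^(m+1))^n := by
        refine Finset.sum_le_sum fun k _ => ?_
        rw [Finset.abs_prod]
        calc ∏ i, |inc d σ (m+1) (w i) (k i)| ≤ ∏ _i : Fin n, (L / 2^(m+1)) :=
              Finset.prod_le_prod (fun i _ => abs_nonneg _)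
                (fun i _ => inc_bound hσ (m+1) (w i) (k i) (k i).isLt)
          _ = (L / 2^(m+1))^n := by rw [Finset.prod_const, Finset.card_univ, Fintype.card_fin]
    _ = (((Finset.univ.filter (fun k : Fin n → Fin (2^(m+1)) => StrictMono k)) \
        (Finset.univ.filter
          (fun k : Fin n → Fin (2^(m+1)) => StrictMono (fun i => (k i : ℕ) / 2)))).card : ℝ)
          * (L / 2^(m+1))^n := by rw [Finset.sum_const, nsmul_eq_mul]
    _ ≤ ((n:ℝ)^2 * ((2:ℝ)^(m+1))^(n-1)) * (L / 2^(m+1))^n := by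
        apply mul_le_mul_of_nonneg_right _
          (pow_nonneg (div_nonneg hL0 (by positivity)) n)
        calc _ ≤ ((n^2 * ((2^(m+1)) : ℕ)^(n-1) : ℕ) : ℝ) := by exact_mod_cast hcard
          _ = (n:ℝ)^2 * ((2:ℝ)^(m+1))^(n-1) := by push_cast; ring
    _ ≤ (n:ℝ)^2 * L^n / 2^(m+1) := ?_
  rcases n with _ | n'
  · simp
  · apply le_of_eq
    rw [div_pow, Nat.add_sub_cancel]
    have h2 : ((2:ℝ)^(m+1)) ≠ 0 := by positivity
    field_simp
    ring

/-- For a path Lipschitz on `[0,1]`, the dyadic sums converge to `sigCoeff`, with the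
explicit uniform rate `n² Lⁿ 2⁻ᵐ`. -/
private lemma sigCoeff_spec {d n : ℕ} {σ : ℝ → PiLp 1 fun _ : Fin d => ℝ} {L : ℝ} (hL0 : 0 ≤ L)
    (hσ : ∀ u ∈ Set.Icc (0:ℝ) 1, ∀ v ∈ Set.Icc (0:ℝ) 1, dist (σ u) (σ v) ≤ L * dist u v)
    (w : Fin n → Fin d) :
    Filter.Tendsto (dyadicSigSum d σ 0 1 w) Filter.atTop (nhds (sigCoeff d σ 0 1 w)) ∧
    ∀ m, dist (dyadicSigSum d σ 0 1 w m) (sigCoeff d σ 0 1 w) ≤ (n:ℝ)^2 * L^n * (1/2)^m := by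
  have hu : ∀ m, dist (dyadicSigSum d σ 0 1 w m) (dyadicSigSum d σ 0 1 w (m+1)) ≤
      ((n:ℝ)^2 * L^n / 2) * (1/2)^m := by
    intro m
    rw [dist_comm, Real.dist_eq]
    calc |dyadicSigSum d σ 0 1 w (m+1) - dyadicSigSum d σ 0 1 w m|
        ≤ (n:ℝ)^2 * L^n / 2^(m+1) := dyadic_step hL0 hσ w m
      _ = ((n:ℝ)^2 * L^n / 2) * (1/2)^m := by
          rw [div_pow, one_pow, pow_succ (2:ℝ) m, mul_comm ((2:ℝ)^m) 2, ← div_div,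
            div_eq_mul_one_div]
  have hr : (1/2 : ℝ) < 1 := by norm_num
  have hcauchy : CauchySeq (dyadicSigSum d σ 0 1 w) :=
    cauchySeq_of_le_geometric (1/2) ((n:ℝ)^2 * L^n / 2) hr hu
  obtain ⟨x, hx⟩ := cauchySeq_tendsto_of_complete hcauchy
  have hlim : sigCoeff d σ 0 1 w = x := hx.limUnder_eq
  rw [hlim]
  refine ⟨hx, fun m => ?_⟩
  calc dist (dyadicSigSum d σ 0 1 w m) x ≤ ((n:ℝ)^2 * L^n / 2) * (1/2)^m / (1 - 1/2) :=
        dist_le_of_le_geometric_of_tendsto (1/2) ((n:ℝ)^2 * L^n / 2) hr hu hx m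
    _ = (n:ℝ)^2 * L^n * (1/2)^m := by
        have h12 : (1:ℝ) - 1/2 = 1/2 := by norm_num
        rw [h12, div_eq_mul_inv, one_div, inv_inv]
        ring

/-- Continuity of the signature coefficients under uniform convergence of uniformly
Lipschitz paths. -/
private lemma sigCoeff_tendsto {d n : ℕ} {L : ℝ} (hL0 : 0 ≤ L)
    {σk : ℕ → ℝ → PiLp 1 fun _ : Fin d => ℝ} {σ : ℝ → PiLp 1 fun _ : Fin d => ℝ}
    (hk : ∀ k, ∀ u ∈ Set.Icc (0:ℝ) 1, ∀ v ∈ Set.Icc (0:ℝ) 1,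
      dist (σk k u) (σk k v) ≤ L * dist u v)
    (hσ : ∀ u ∈ Set.Icc (0:ℝ) 1, ∀ v ∈ Set.Icc (0:ℝ) 1, dist (σ u) (σ v) ≤ L * dist u v)
    (hTU : TendstoUniformlyOn (fun k t => σk k t) σ Filter.atTop (Set.Icc 0 1))
    (w : Fin n → Fin d) :
    Filter.Tendsto (fun k => sigCoeff d (σk k) 0 1 w) Filter.atTop
      (nhds (sigCoeff d σ 0 1 w)) := by
  rw [Metric.tendsto_atTop]
  intro ε hε
  obtain ⟨m, hm⟩ : ∃ m : ℕ, (n:ℝ)^2 * L^n * (1/2)^m < ε/3 := by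
    have h0 : Filter.Tendsto (fun m : ℕ => (n:ℝ)^2 * L^n * (1/2)^m) Filter.atTop (nhds 0) := by
      have := (tendsto_pow_atTop_nhds_zero_of_lt_one (r := (1/2:ℝ)) (by norm_num)
        (by norm_num)).const_mul ((n:ℝ)^2 * L^n)
      simpa using this
    exact (h0.eventually_lt_const (by positivity)).exists
  have hdy : Filter.Tendsto (fun k => dyadicSigSum d (σk k) 0 1 w m) Filter.atTop
      (nhds (dyadicSigSum d σ 0 1 w m)) := by
    unfold dyadicSigSum
    refine tendsto_finset_sum _ fun j _ => tendsto_finset_prod _ fun i _ => ?_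
    have e1 : (0:ℝ) + (1 - 0) * ((j i : ℝ) + 1) / 2 ^ m = (((j i : ℕ) : ℝ) + 1) / 2 ^ m := by
      ring
    have e2 : (0:ℝ) + (1 - 0) * (j i : ℝ) / 2 ^ m = ((j i : ℕ) : ℝ) / 2 ^ m := by ring
    rw [e1, e2]
    have hm1 : (((j i : ℕ) : ℝ) + 1) / 2 ^ m ∈ Set.Icc (0:ℝ) 1 := by
      have := mem_Icc_div m ((j i : ℕ) + 1) (j i).isLt
      push_cast at this
      exact this
    have hm2 : ((j i : ℕ) : ℝ) / 2 ^ m ∈ Set.Icc (0:ℝ) 1 := mem_Icc_div m _ (j i).isLt.le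
    exact (tendsto_coord (hTU.tendsto_at hm1) (w i)).sub
      (tendsto_coord (hTU.tendsto_at hm2) (w i))
  obtain ⟨N0, hN0⟩ := (Metric.tendsto_atTop.mp hdy) (ε/3) (by positivity)
  refine ⟨N0, fun k hk' => ?_⟩
  have hsk := (sigCoeff_spec hL0 (hk k) w).2 m
  have hs := (sigCoeff_spec hL0 hσ w).2 m
  calc dist (sigCoeff d (σk k) 0 1 w) (sigCoeff d σ 0 1 w)
      ≤ dist (sigCoeff d (σk k) 0 1 w) (dyadicSigSum d (σk k) 0 1 w m)
        + dist (dyadicSigSum d (σk k) 0 1 w m) (dyadicSigSum d σ 0 1 w m)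
        + dist (dyadicSigSum d σ 0 1 w m) (sigCoeff d σ 0 1 w) := dist_triangle4 _ _ _ _
    _ < ε/3 + ε/3 + ε/3 := by
        refine add_lt_add (add_lt_add ?_ (hN0 k hk')) (lt_of_le_of_lt hs hm)
        rw [dist_comm]
        exact lt_of_le_of_lt hsk hm
    _ = ε := by ring

/-- A variation bound gives a pointwise Lipschitz bound. -/
private lemma lip_of_var {d : ℕ} {σ : ℝ → PiLp 1 fun _ : Fin d => ℝ} {L : ℝ} (hL0 : 0 ≤ L)
    (h : ∀ s t : ℝ, 0 ≤ s → s ≤ t → t ≤ 1 →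
      eVariationOn σ (Set.Icc s t) ≤ ENNReal.ofReal (L * (t - s))) :
    ∀ u ∈ Set.Icc (0:ℝ) 1, ∀ v ∈ Set.Icc (0:ℝ) 1, dist (σ u) (σ v) ≤ L * dist u v := by
  have key : ∀ u v : ℝ, u ∈ Set.Icc (0:ℝ) 1 → v ∈ Set.Icc (0:ℝ) 1 → u ≤ v →
      dist (σ u) (σ v) ≤ L * dist u v := by
    intro u v hu hv huv
    have h1 : edist (σ u) (σ v) ≤ eVariationOn σ (Set.Icc u v) :=
      eVariationOn.edist_le σ (Set.left_mem_Icc.mpr huv) (Set.right_mem_Icc.mpr huv)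
    have h3 : edist (σ u) (σ v) ≤ ENNReal.ofReal (L * (v - u)) :=
      h1.trans (h u v hu.1 huv hv.2)
    have h4 : dist (σ u) (σ v) ≤ L * (v - u) :=
      (edist_le_ofReal (mul_nonneg hL0 (sub_nonneg.mpr huv))).mp h3
    calc dist (σ u) (σ v) ≤ L * (v - u) := h4
      _ = L * dist u v := by
          rw [Real.dist_eq, abs_of_nonpos (sub_nonpos.mpr huv)]
          ring
  intro u hu v hv
  rcases le_total u v with huv | huv
  · exact key u v hu hv huv
  · rw [dist_comm, dist_comm u v]
    exact key v u hv hu huv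

/-- A pointwise Lipschitz bound gives the variation bound. -/
private lemma var_of_lip {d : ℕ} {σ : ℝ → PiLp 1 fun _ : Fin d => ℝ} {L : ℝ} (hL0 : 0 ≤ L)
    (hσ : ∀ u ∈ Set.Icc (0:ℝ) 1, ∀ v ∈ Set.Icc (0:ℝ) 1, dist (σ u) (σ v) ≤ L * dist u v) :
    ∀ s t : ℝ, 0 ≤ s → s ≤ t → t ≤ 1 →
      eVariationOn σ (Set.Icc s t) ≤ ENNReal.ofReal (L * (t - s)) := by
  intro s t hs hst ht1
  have hsub : Set.Icc s t ⊆ Set.Icc (0:ℝ) 1 := Set.Icc_subset_Icc hs ht1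
  have hlip : LipschitzOnWith L.toNNReal σ (Set.Icc s t) := by
    rw [lipschitzOnWith_iff_dist_le_mul]
    intro x hx y hy
    have := hσ x (hsub hx) y (hsub hy)
    rwa [Real.coe_toNNReal L hL0]
  have hid : eVariationOn id (Set.Icc s t) ≤ ENNReal.ofReal (t - s) := by
    have hmono : MonotoneOn (id : ℝ → ℝ) (Set.Icc s t) := fun x _ y _ hxy => hxy
    have h := hmono.eVariationOn_le (Set.left_mem_Icc.mpr hst) (Set.right_mem_Icc.mpr hst)
    rwa [Set.inter_self] at h
  calc eVariationOn σ (Set.Icc s t) = eVariationOn (σ ∘ id) (Set.Icc s t) := rfl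
    _ ≤ (L.toNNReal : ℝ≥0∞) * eVariationOn id (Set.Icc s t) :=
        hlip.comp_eVariationOn_le (Set.mapsTo_id _)
    _ ≤ (L.toNNReal : ℝ≥0∞) * ENNReal.ofReal (t - s) := mul_le_mul_right hid _
    _ = ENNReal.ofReal (L * (t - s)) := by
        rw [ENNReal.ofReal_mul hL0]
        rfl

end Aux

/-- Inversion of the signature: let `γ : [0,1] → ℝ^d` be a tree-reduced path of length
`L`, parametrized at unit speed and starting at the origin (tree-reducedness, via the
uniqueness theorem of Hambly–Lyons, is expressed by saying that any path starting at the
origin, of length at most `L`, Lipschitz with constant `L`, with the same signature as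
`γ`, coincides with `γ` on `[0,1]`). If `(γ̂^{(N)})` is a sequence of paths starting
at the origin, Lipschitz with constant `L` (i.e. of length at most `L` parametrized at
constant speed), whose signatures converge term by term to that of `γ`, then `γ̂^{(N)}`
converges uniformly to `γ` on `[0,1]`. -/
theorem signature_inversion_uniform_limit (d : ℕ)
    (γ : ℝ → PiLp 1 fun _ : Fin d => ℝ) (L : ℝ) (hL0 : 0 ≤ L)
    (hγcont : ContinuousOn γ (Set.Icc 0 1)) (hγ0 : γ 0 = 0)
    (hγspeed : ∀ s t : ℝ, 0 ≤ s → s ≤ t → t ≤ 1 →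
      eVariationOn γ (Set.Icc s t) = ENNReal.ofReal (L * (t - s)))
    (htreeReduced : ∀ σ : ℝ → PiLp 1 fun _ : Fin d => ℝ,
      ContinuousOn σ (Set.Icc 0 1) → σ 0 = 0 →
      (∀ s t : ℝ, 0 ≤ s → s ≤ t → t ≤ 1 →
        eVariationOn σ (Set.Icc s t) ≤ ENNReal.ofReal (L * (t - s))) →
      (∀ n : ℕ, sig d σ 0 1 n = sig d γ 0 1 n) →
      Set.EqOn σ γ (Set.Icc 0 1))
    (γhat : ℕ → ℝ → PiLp 1 fun _ : Fin d => ℝ)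
    (hhatcont : ∀ N, ContinuousOn (γhat N) (Set.Icc 0 1))
    (hhat0 : ∀ N, γhat N 0 = 0)
    (hhatspeed : ∀ N, ∀ s t : ℝ, 0 ≤ s → s ≤ t → t ≤ 1 →
      eVariationOn (γhat N) (Set.Icc s t) ≤ ENNReal.ofReal (L * (t - s)))
    (hsig : ∀ n : ℕ, Filter.Tendsto (fun N => sig d (γhat N) 0 1 n)
      Filter.atTop (nhds (sig d γ 0 1 n))) :
    TendstoUniformlyOn (fun N t => γhat N t) γ Filter.atTop (Set.Icc 0 1) := by
  classical
  -- pointwise Lipschitz bounds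
  have hlip : ∀ N, ∀ u ∈ Set.Icc (0:ℝ) 1, ∀ v ∈ Set.Icc (0:ℝ) 1,
      dist (γhat N u) (γhat N v) ≤ L * dist u v := fun N => lip_of_var hL0 (hhatspeed N)
  -- the zero point of the interval
  have hz : (0:ℝ) ∈ Set.Icc (0:ℝ) 1 := Set.mem_Icc.mpr ⟨le_refl 0, zero_le_one⟩
  set z : Set.Icc (0:ℝ) 1 := ⟨0, hz⟩ with hzdef
  -- the restrictions as continuous maps
  set F : ℕ → C(Set.Icc (0:ℝ) 1, PiLp 1 fun _ : Fin d => ℝ) :=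
    fun N => ⟨(Set.Icc (0:ℝ) 1).restrict (γhat N), (hhatcont N).restrict⟩ with hF
  set G : C(Set.Icc (0:ℝ) 1, PiLp 1 fun _ : Fin d => ℝ) :=
    ⟨(Set.Icc (0:ℝ) 1).restrict γ, hγcont.restrict⟩ with hG
  -- the compact set of L-Lipschitz functions vanishing at 0
  set S : Set C(Set.Icc (0:ℝ) 1, PiLp 1 fun _ : Fin d => ℝ) :=
    {f | (∀ x y : Set.Icc (0:ℝ) 1, dist (f x) (f y) ≤ L * dist x y) ∧ f z = 0} with hS
  have hdistX : ∀ x y : Set.Icc (0:ℝ) 1, dist x y = dist (x:ℝ) (y:ℝ) := fun x y => rfl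
  have hSc : IsCompact S := by
    apply ArzelaAscoli.isCompact_of_equicontinuous
    · -- pointwise compactness
      have himg : ContinuousMap.toFun '' S =
          {g : Set.Icc (0:ℝ) 1 → PiLp 1 fun _ : Fin d => ℝ |
            (∀ x y : Set.Icc (0:ℝ) 1, dist (g x) (g y) ≤ L * dist x y) ∧ g z = 0} := by
        ext g
        constructor
        · rintro ⟨f, hf, rfl⟩
          exact hf
        · rintro ⟨hg1, hg2⟩
          have hgl : LipschitzWith L.toNNReal g := by
            apply LipschitzWith.of_dist_le_mul
            intro x y
            calc dist (g x) (g y) ≤ L * dist x y := hg1 x y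
              _ = (L.toNNReal : ℝ) * dist x y := by rw [Real.coe_toNNReal L hL0]
          exact ⟨⟨g, hgl.continuous⟩, ⟨hg1, hg2⟩, rfl⟩
      rw [himg]
      have hsub : {g : Set.Icc (0:ℝ) 1 → PiLp 1 fun _ : Fin d => ℝ |
            (∀ x y : Set.Icc (0:ℝ) 1, dist (g x) (g y) ≤ L * dist x y) ∧ g z = 0} ⊆
          Set.univ.pi fun _ : Set.Icc (0:ℝ) 1 =>
            Metric.closedBall (0 : PiLp 1 fun _ : Fin d => ℝ) L := by
        rintro g ⟨hg1, hg2⟩ x _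
        rw [Metric.mem_closedBall]
        calc dist (g x) 0 = dist (g x) (g z) := by rw [hg2]
          _ ≤ L * dist x z := hg1 x z
          _ ≤ L * 1 := by
              apply mul_le_mul_of_nonneg_left _ hL0
              rw [hdistX, Real.dist_eq]
              rw [abs_of_nonneg (by have hz0 : (z:ℝ) = 0 := rfl; rw [hz0, sub_zero]; exact x.2.1)]
              have hz0 : (z:ℝ) = 0 := rfl; rw [hz0, sub_zero]; exact x.2.2
          _ = L := mul_one L
      have hclosed : IsClosed
          {g : Set.Icc (0:ℝ) 1 → PiLp 1 fun _ : Fin d => ℝ |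
            (∀ x y : Set.Icc (0:ℝ) 1, dist (g x) (g y) ≤ L * dist x y) ∧ g z = 0} := by
        have : {g : Set.Icc (0:ℝ) 1 → PiLp 1 fun _ : Fin d => ℝ |
              (∀ x y : Set.Icc (0:ℝ) 1, dist (g x) (g y) ≤ L * dist x y) ∧ g z = 0} =
            (⋂ x : Set.Icc (0:ℝ) 1, ⋂ y : Set.Icc (0:ℝ) 1,
              {g : Set.Icc (0:ℝ) 1 → PiLp 1 fun _ : Fin d => ℝ |
                dist (g x) (g y) ≤ L * dist x y}) ∩
              {g : Set.Icc (0:ℝ) 1 → PiLp 1 fun _ : Fin d => ℝ | g z = 0} := by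
          ext g
          constructor
          · rintro ⟨h1, h2⟩
            exact ⟨Set.mem_iInter.mpr fun x => Set.mem_iInter.mpr fun y => h1 x y, h2⟩
          · rintro ⟨h1, h2⟩
            exact ⟨fun x y => Set.mem_iInter.mp (Set.mem_iInter.mp h1 x) y, h2⟩
        rw [this]
        apply IsClosed.inter
        · apply isClosed_iInter; intro x
          apply isClosed_iInter; intro y
          exact isClosed_le ((continuous_apply x).dist (continuous_apply y)) continuous_const
        · exact isClosed_eq (continuous_apply z) continuous_const
      exact (isCompact_univ_pi fun _ => isCompact_closedBall 0 L).of_isClosed_subset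
        hclosed hsub
    · -- equicontinuity
      apply Metric.equicontinuous_of_continuity_modulus (fun δ => L * δ)
      · have : Filter.Tendsto (fun δ : ℝ => L * δ) (nhds 0) (nhds (L * 0)) :=
          (continuous_const.mul continuous_id).tendsto 0
        simpa using this
      · intro x y f
        exact f.2.1 x y
  -- it suffices to prove convergence in C(X, E)
  suffices hFG : Filter.Tendsto F Filter.atTop (nhds G) by
    have hTU : TendstoUniformly (fun N (x : Set.Icc (0:ℝ) 1) => (F N) x) G Filter.atTop :=
      ContinuousMap.tendsto_iff_tendstoUniformly.mp hFG
    rw [tendstoUniformlyOn_iff_tendstoUniformly_comp_coe]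
    exact hTU
  -- via subsequences
  apply Filter.tendsto_of_subseq_tendsto
  intro ns hns
  have hFS : ∀ k, F (ns k) ∈ S := by
    intro k
    refine ⟨fun x y => ?_, ?_⟩
    · exact hlip (ns k) x x.2 y y.2
    · show γhat (ns k) 0 = 0
      exact hhat0 (ns k)
  obtain ⟨g, hgS, φ, hφ, hconv⟩ := hSc.tendsto_subseq hFS
  -- the candidate limit path
  set σ : ℝ → PiLp 1 fun _ : Fin d => ℝ :=
    fun t => g (Set.projIcc 0 1 zero_le_one t) with hσdef
  have hσIcc : ∀ t, ∀ ht : t ∈ Set.Icc (0:ℝ) 1, σ t = g ⟨t, ht⟩ := by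
    intro t ht
    simp only [hσdef]
    congr 1
    exact Set.projIcc_of_mem zero_le_one ht
  have hσcont : ContinuousOn σ (Set.Icc 0 1) :=
    (g.continuous.comp (continuous_projIcc)).continuousOn
  have hσ0 : σ 0 = 0 := by
    rw [hσIcc 0 hz]
    exact hgS.2
  have hσlip : ∀ u ∈ Set.Icc (0:ℝ) 1, ∀ v ∈ Set.Icc (0:ℝ) 1,
      dist (σ u) (σ v) ≤ L * dist u v := by
    intro u hu v hv
    rw [hσIcc u hu, hσIcc v hv]
    exact hgS.1 ⟨u, hu⟩ ⟨v, hv⟩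
  have hσvar : ∀ s t : ℝ, 0 ≤ s → s ≤ t → t ≤ 1 →
      eVariationOn σ (Set.Icc s t) ≤ ENNReal.ofReal (L * (t - s)) := var_of_lip hL0 hσlip
  -- uniform convergence of the subsequence to σ on [0,1]
  have hTUσ : TendstoUniformlyOn (fun k t => γhat (ns (φ k)) t) σ Filter.atTop
      (Set.Icc 0 1) := by
    rw [tendstoUniformlyOn_iff_tendstoUniformly_comp_coe]
    have h1 : TendstoUniformly (fun k (x : Set.Icc (0:ℝ) 1) => (F (ns (φ k))) x) g
        Filter.atTop :=
      ContinuousMap.tendsto_iff_tendstoUniformly.mp hconv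
    have h2 : (σ ∘ ((↑) : Set.Icc (0:ℝ) 1 → ℝ)) = ⇑g := by
      funext x
      exact hσIcc x.1 x.2
    rw [show (σ ∘ ((↑) : (Set.Icc (0:ℝ) 1) → ℝ)) = ⇑g from h2]
    exact h1
  -- σ has the same signature as γ
  have hσsig : ∀ n : ℕ, sig d σ 0 1 n = sig d γ 0 1 n := by
    intro n
    refine PiLp.ext fun w => ?_
    have h1 : Filter.Tendsto (fun k => sigCoeff d (γhat (ns (φ k))) 0 1 w) Filter.atTop
        (nhds (sigCoeff d σ 0 1 w)) :=
      sigCoeff_tendsto hL0 (fun k => hlip (ns (φ k))) hσlip hTUσ w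
    have h2 : Filter.Tendsto (fun N => sig d (γhat N) 0 1 n w) Filter.atTop
        (nhds (sig d γ 0 1 n w)) := tendsto_coord (hsig n) w
    have h3 : Filter.Tendsto (fun k => ns (φ k)) Filter.atTop Filter.atTop :=
      hns.comp hφ.tendsto_atTop
    have h4 : Filter.Tendsto (fun k => sigCoeff d (γhat (ns (φ k))) 0 1 w) Filter.atTop
        (nhds (sig d γ 0 1 n w)) := h2.comp h3
    exact tendsto_nhds_unique h1 h4
  -- by tree-reducedness, σ = γ on [0,1], hence g = G
  have hEq : Set.EqOn σ γ (Set.Icc 0 1) := htreeReduced σ hσcont hσ0 hσvar hσsig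
  have hgG : g = G := by
    apply ContinuousMap.ext
    intro x
    have := hEq x.2
    rw [hσIcc x.1 x.2] at this
    exact this
  exact ⟨φ, hgG ▸ hconv⟩
end
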